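/- Under Assumptions A with ε_m < ε_M, let (δ_n) be a sequence of natural numbers with δ_n/n → δ where ε_m < δ < ε_M, and let (κ_n) be a sequence of natural numbers with κ_n → ∞, κ_n/n → 0, and (δ_n − δ·n)/κ_n → 0. Then there exists N such that for all n > N: A_{κ_n} < δ_n − ⌊δ(n − κ_n)⌋ < B_{κ_n} (as integers). -/

import Mathlib

open Filter Set

/-- Under Assumptions A with `ε_m < ε_M`: if `δ_n/n → δ ∈ (ε_m, ε_M)` and `(κ_n)`
satisfies `κ_n → ∞`, `κ_n/n → 0` and `(δ_n − δn)/κ_n → 0`, then eventually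
`A_{κ_n} < δ_n − ⌊δ(n − κ_n)⌋ < B_{κ_n}` (as integers). -/
theorem claim_in_theorem_3_6
    (p : ℕ → ℕ → ℕ) (A B : ℕ → ℕ) (K C : ℝ)
    (hK : 0 < K) (hpK : ∀ n, 1 ≤ n → ∀ m, (p n m : ℝ) ≤ K ^ n)
    (hC : 0 < C)
    (hABle : ∀ n, 1 ≤ n → A n ≤ B n)
    (hBC : ∀ n, 1 ≤ n → (B n : ℝ) ≤ C * n)
    (hpos : ∀ n, 1 ≤ n → ∀ m, A n ≤ m → m ≤ B n → 0 < p n m)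
    (hzero : ∀ n, 1 ≤ n → ∀ m, (m < A n ∨ B n < m) → p n m = 0)
    (hsuper : ∀ n₁ n₂, 1 ≤ n₁ → 1 ≤ n₂ → ∀ m₁ m₂,
      p n₁ m₁ * p n₂ m₂ ≤ p (n₁ + n₂) (m₁ + m₂))
    (εm εM : ℝ)
    (hεm : Tendsto (fun n : ℕ => (A n : ℝ) / n) atTop (nhds εm))
    (hεM : Tendsto (fun n : ℕ => (B n : ℝ) / n) atTop (nhds εM))
    (hlt : εm < εM)
    (δseq : ℕ → ℕ) (δ : ℝ) (hδ : δ ∈ Set.Ioo εm εM)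
    (htend : Tendsto (fun n : ℕ => (δseq n : ℝ) / n) atTop (nhds δ))
    (κ : ℕ → ℕ)
    (hκtop : Tendsto κ atTop atTop)
    (hκo : Tendsto (fun n : ℕ => (κ n : ℝ) / n) atTop (nhds 0))
    (hfo : Tendsto (fun n : ℕ => ((δseq n : ℝ) - δ * n) / (κ n : ℝ)) atTop (nhds 0)) :
    ∃ N : ℕ, ∀ n : ℕ, N < n →
      (A (κ n) : ℤ) < (δseq n : ℤ) - ⌊δ * ((n : ℝ) - (κ n : ℝ))⌋ ∧
      (δseq n : ℤ) - ⌊δ * ((n : ℝ) - (κ n : ℝ))⌋ < (B (κ n) : ℤ) := by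

  obtain ⟨hδ1, hδ2⟩ := hδ
  have hκR : Tendsto (fun n : ℕ => (κ n : ℝ)) atTop atTop :=
    tendsto_natCast_atTop_atTop.comp hκtop
  have hinv : Tendsto (fun n : ℕ => 1 / (κ n : ℝ)) atTop (nhds 0) := by
    simpa [one_div, Pi.inv_def] using hκR.inv_tendsto_atTop
  have hL : Tendsto (fun n : ℕ => ((δseq n : ℝ) - δ * n) / (κ n : ℝ) + δ)
      atTop (nhds δ) := by
    simpa using hfo.add (tendsto_const_nhds (x := δ))
  have hU : Tendsto (fun n : ℕ => ((δseq n : ℝ) - δ * n) / (κ n : ℝ) + δ + 1 / (κ n : ℝ))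
      atTop (nhds δ) := by
    simpa using hL.add hinv
  have hκpos : ∀ᶠ n : ℕ in atTop, 0 < (κ n : ℝ) := hκR.eventually_gt_atTop 0
  set f : ℕ → ℝ := fun n => ((δseq n : ℝ) - (⌊δ * ((n : ℝ) - (κ n : ℝ))⌋ : ℝ)) / (κ n : ℝ)
    with hf
  have hfloor_le : ∀ n : ℕ, ((⌊δ * ((n : ℝ) - (κ n : ℝ))⌋ : ℝ)) ≤ δ * ((n : ℝ) - (κ n : ℝ)) :=
    fun n => Int.floor_le _
  have hle_floor : ∀ n : ℕ, δ * ((n : ℝ) - (κ n : ℝ)) - 1 < ((⌊δ * ((n : ℝ) - (κ n : ℝ))⌋ : ℝ)) :=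
    fun n => Int.sub_one_lt_floor _
  have hfl : ∀ᶠ n : ℕ in atTop,
      ((δseq n : ℝ) - δ * n) / (κ n : ℝ) + δ ≤ f n := by
    filter_upwards [hκpos] with n hn
    have heq : ((δseq n : ℝ) - δ * n) / (κ n : ℝ) + δ
        = (((δseq n : ℝ) - δ * n) + δ * (κ n : ℝ)) / (κ n : ℝ) := by
      field_simp
    rw [hf, heq, div_le_div_iff_of_pos_right hn]
    have := hfloor_le n
    nlinarith [this]
  have hfu : ∀ᶠ n : ℕ in atTop,
      f n ≤ ((δseq n : ℝ) - δ * n) / (κ n : ℝ) + δ + 1 / (κ n : ℝ) := by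
    filter_upwards [hκpos] with n hn
    have heq : ((δseq n : ℝ) - δ * n) / (κ n : ℝ) + δ + 1 / (κ n : ℝ)
        = (((δseq n : ℝ) - δ * n) + δ * (κ n : ℝ) + 1) / (κ n : ℝ) := by
      field_simp
    rw [hf, heq, div_le_div_iff_of_pos_right hn]
    have := hle_floor n
    nlinarith [this]
  have hfδ : Tendsto f atTop (nhds δ) :=
    tendsto_of_tendsto_of_tendsto_of_le_of_le' hL hU hfl hfu
  have hA : Tendsto (fun n : ℕ => (A (κ n) : ℝ) / (κ n : ℝ)) atTop (nhds εm) :=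
    hεm.comp hκtop
  have hB : Tendsto (fun n : ℕ => (B (κ n) : ℝ) / (κ n : ℝ)) atTop (nhds εM) :=
    hεM.comp hκtop
  have hdA : Tendsto (fun n : ℕ => f n - (A (κ n) : ℝ) / (κ n : ℝ)) atTop
      (nhds (δ - εm)) := hfδ.sub hA
  have hdB : Tendsto (fun n : ℕ => (B (κ n) : ℝ) / (κ n : ℝ) - f n) atTop
      (nhds (εM - δ)) := hB.sub hfδ
  have hposA : ∀ᶠ n : ℕ in atTop, 0 < f n - (A (κ n) : ℝ) / (κ n : ℝ) :=
    hdA.eventually (lt_mem_nhds (by linarith))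
  have hposB : ∀ᶠ n : ℕ in atTop, 0 < (B (κ n) : ℝ) / (κ n : ℝ) - f n :=
    hdB.eventually (lt_mem_nhds (by linarith))
  have hall := (hposA.and (hposB.and hκpos))
  rw [eventually_atTop] at hall
  obtain ⟨N, hN⟩ := hall
  refine ⟨N, fun n hn => ?_⟩
  obtain ⟨h1, h2, h3⟩ := hN n hn.le
  constructor
  · have : (A (κ n) : ℝ) / (κ n : ℝ) < f n := by linarith
    rw [hf, div_lt_div_iff_of_pos_right h3] at this
    exact_mod_cast this
  · have : f n < (B (κ n) : ℝ) / (κ n : ℝ) := by linarith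
    rw [hf, div_lt_div_iff_of_pos_right h3] at this
    exact_mod_cast this
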